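/- Over the box [0,1] × [0,U] with U > 0, the McCormick relaxation of the bilinear graph {(x, y, xy) : 0 ≤ x ≤ 1, 0 ≤ y ≤ U} equals its convex hull. That is, a point (x, y, w) with 0 ≤ x ≤ 1 and 0 ≤ y ≤ U satisfies 0 ≤ w, w ≤ Ux, w ≤ y, and w ≥ y − U(1−x) if and only if (x, y, w) lies in the convex hull of {(x, y, xy) : 0 ≤ x ≤ 1, 0 ≤ y ≤ U}. -/

import Mathlib

/-- The bilinear graph `{(x, y, xy) : 0 ≤ x ≤ 1, 0 ≤ y ≤ U}` in `ℝ × ℝ × ℝ`. -/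
def bilinearGraph (U : ℝ) : Set (ℝ × ℝ × ℝ) :=
  {p | ∃ x y : ℝ, 0 ≤ x ∧ x ≤ 1 ∧ 0 ≤ y ∧ y ≤ U ∧ p = (x, y, x * y)}

/-- over the box `[0,1] × [0,U]` with `U > 0`, the McCormick relaxation
of the bilinear graph equals its convex hull. -/
theorem mccormick_eq_convexHull (U : ℝ) (hU : 0 < U) :
    ∀ x y w : ℝ, 0 ≤ x → x ≤ 1 → 0 ≤ y → y ≤ U →
      ((0 ≤ w ∧ w ≤ U * x ∧ w ≤ y ∧ y - U * (1 - x) ≤ w) ↔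
        (x, y, w) ∈ convexHull ℝ (bilinearGraph U)) := by
  intro x y w hx0 hx1 hy0 hyU
  constructor
  · rintro ⟨hw0, hwux, hwy, hlow⟩
    -- convex combination of four vertices
    set z : Fin 4 → ℝ × ℝ × ℝ := ![(0, 0, 0), (1, 0, 0), (0, U, 0), (1, U, U)] with hz
    set lam : Fin 4 → ℝ :=
      ![1 - x - y / U + w / U, x - w / U, y / U - w / U, w / U] with hlam
    have hU' := hU.ne'
    have hlam0 : ∀ i ∈ Finset.univ, 0 ≤ lam i := by
      intro i _
      fin_cases i <;> simp only [hlam, Matrix.cons_val_zero, Matrix.cons_val_one,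
        Matrix.head_cons, Matrix.cons_val_two, Matrix.tail_cons, Matrix.cons_val_three]
      · rw [show 1 - x - y / U + w / U = (U - x * U - y + w) / U by field_simp]
        apply div_nonneg (by nlinarith) hU.le
      · rw [show x - w / U = (x * U - w) / U by field_simp]
        apply div_nonneg (by nlinarith) hU.le
      · rw [show y / U - w / U = (y - w) / U by field_simp]
        apply div_nonneg (by linarith) hU.le
      · exact div_nonneg hw0 hU.le
    have hsum : ∑ i ∈ Finset.univ, lam i = 1 := by
      simp [hlam, Fin.sum_univ_four]; ring
    have hmem : ∀ i ∈ Finset.univ, z i ∈ bilinearGraph U := by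
      intro i _
      fin_cases i
      · exact ⟨0, 0, le_refl 0, zero_le_one, le_refl 0, hU.le, by norm_num [hz]⟩
      · exact ⟨1, 0, zero_le_one, le_refl 1, le_refl 0, hU.le, by norm_num [hz]⟩
      · exact ⟨0, U, le_refl 0, zero_le_one, hU.le, le_refl U, by norm_num [hz]⟩
      · exact ⟨1, U, zero_le_one, le_refl 1, hU.le, le_refl U, by norm_num [hz]⟩
    have := Finset.centerMass_mem_convexHull Finset.univ hlam0 (by rw [hsum]; norm_num) hmem
    have hcm : Finset.univ.centerMass lam z = (x, y, w) := by
      rw [Finset.centerMass_eq_of_sum_1 _ _ hsum]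
      simp [hz, hlam, Fin.sum_univ_four, Prod.ext_iff, Prod.smul_mk, smul_eq_mul]
      all_goals field_simp
      simp
    rwa [hcm] at this
  · intro hmem
    have hconv : Convex ℝ {p : ℝ × ℝ × ℝ |
        0 ≤ p.2.2 ∧ p.2.2 ≤ U * p.1 ∧ p.2.2 ≤ p.2.1 ∧ p.2.1 - U * (1 - p.1) ≤ p.2.2} := by
      rintro p ⟨h1, h2, h3, h4⟩ q ⟨k1, k2, k3, k4⟩ a b ha hb hab
      refine ⟨?_, ?_, ?_, ?_⟩ <;>
        simp only [Prod.snd_add, Prod.fst_add, Prod.smul_snd, Prod.smul_fst, smul_eq_mul] <;>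
        nlinarith [mul_nonneg ha h1, mul_nonneg hb k1, mul_le_mul_of_nonneg_left h2 ha,
          mul_le_mul_of_nonneg_left k2 hb, mul_le_mul_of_nonneg_left h3 ha,
          mul_le_mul_of_nonneg_left k3 hb, mul_le_mul_of_nonneg_left h4 ha,
          mul_le_mul_of_nonneg_left k4 hb]
    have hsub : bilinearGraph U ⊆ {p : ℝ × ℝ × ℝ |
        0 ≤ p.2.2 ∧ p.2.2 ≤ U * p.1 ∧ p.2.2 ≤ p.2.1 ∧ p.2.1 - U * (1 - p.1) ≤ p.2.2} := by
      rintro p ⟨a, b, ha0, ha1, hb0, hbU, rfl⟩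
      refine ⟨mul_nonneg ha0 hb0, ?_, ?_, ?_⟩ <;> simp <;> nlinarith
    have := convexHull_min hsub hconv hmem
    obtain ⟨H1, H2, H3, H4⟩ := this
    exact ⟨H1, H2, H3, H4⟩
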